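/- Let u : [0,∞) × 𝕋ⁿ → ℝ be a C¹ solution of u_t + b·∇u = ∫ K(t,x,y)(u(t,y) − u(t,x)) dy, where b is a continuous vector field and K ≥ 0 is a nonnegative integrable kernel. Then u satisfies the maximum principle: for all t ≥ 0 and x, min u(0,·) ≤ u(t,x) ≤ max u(0,·). Moreover, t ↦ max_x u(t,x) is nonincreasing and t ↦ min_x u(t,x) is nondecreasing. -/
import Mathlib


open MeasureTheory Set

/-- If `g` has derivative `d` at `r0` and `g` attains a maximum over `[a, r0]` at the right
endpoint `r0` (with `a < r0`), then `d ≥ 0`. -/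
theorem left_max_deriv_nonneg' {g : ℝ → ℝ} {a r0 d : ℝ} (h : a < r0)
    (hd : HasDerivAt g d r0) (hmax : ∀ r ∈ Set.Icc a r0, g r ≤ g r0) : 0 ≤ d := by
  by_contra hd0
  push_neg at hd0
  have hs := hasDerivAt_iff_tendsto_slope.1 hd
  have h1 : {r | slope g r0 r < 0} ∈ nhdsWithin r0 {r0}ᶜ := hs (Iio_mem_nhds hd0)
  have hmono : nhdsWithin r0 (Set.Iio r0) ≤ nhdsWithin r0 {r0}ᶜ :=
    nhdsWithin_mono _ (fun y hy => ne_of_lt hy)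
  have h1' : {r | slope g r0 r < 0} ∈ nhdsWithin r0 (Set.Iio r0) := hmono h1
  have h2 : Set.Ioo a r0 ∈ nhdsWithin r0 (Set.Iio r0) :=
    Ioo_mem_nhdsLT_of_mem ⟨h, le_refl r0⟩
  have hne : ({r | slope g r0 r < 0} ∩ Set.Ioo a r0).Nonempty :=
    Filter.nonempty_of_mem (Filter.inter_mem h1' h2)
  obtain ⟨r, hrs, hra, hrr0⟩ := hne
  have hslope : slope g r0 r = (g r - g r0) / (r - r0) := slope_def_field g r0 r
  simp only [Set.mem_setOf_eq] at hrs
  rw [hslope] at hrs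
  have hpos : 0 < g r - g r0 := by
    rcases div_neg_iff.1 hrs with ⟨hnum, hden⟩ | ⟨hnum, hden⟩
    · linarith
    · linarith
  have := hmax r ⟨hra.le, hrr0.le⟩
  linarith

/-- Core maximum principle: the value at any later time is bounded by the sup at an earlier
time. -/
theorem max_principle_aux (n : ℕ)
    (u ut : ℝ → (Fin n → ℝ) → ℝ)
    (du : ℝ → (Fin n → ℝ) → ((Fin n → ℝ) →L[ℝ] ℝ))
    (b : ℝ → (Fin n → ℝ) → (Fin n → ℝ))
    (K : ℝ → (Fin n → ℝ) → (Fin n → ℝ) → ℝ)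
    (hper : ∀ t x (m : Fin n → ℤ), u t (x + fun i => (m i : ℝ)) = u t x)
    (hucont : Continuous (Function.uncurry u))
    (hut : ∀ t x, HasDerivAt (fun s => u s x) (ut t x) t)
    (hdu : ∀ t x, HasFDerivAt (u t) (du t x) x)
    (hK : ∀ t x y, 0 ≤ K t x y)
    (heq : ∀ t x, ut t x + du t x (b t x) = ∫ y, K t x y * (u t y - u t x)) :
    ∀ s t : ℝ, s ≤ t → ∀ x, u t x ≤ sSup (Set.range (u s)) := by
  intro s t hst x
  set C : Set (Fin n → ℝ) := Set.Icc 0 1 with hCdef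
  have hC : IsCompact C := isCompact_Icc
  have hC0 : (0 : Fin n → ℝ) ∈ C := Set.mem_Icc.2 ⟨le_refl _, fun i => zero_le_one⟩
  -- reduce any point to the fundamental cube
  have hredu : ∀ r (z : Fin n → ℝ), ∃ y ∈ C, u r z = u r y := by
    intro r z
    refine ⟨fun i => Int.fract (z i), ⟨fun i => Int.fract_nonneg _,
      fun i => (Int.fract_lt_one _).le⟩, ?_⟩
    have hz : z = (fun i => Int.fract (z i)) + fun i => ((⌊z i⌋ : ℤ) : ℝ) := by
      funext i
      simp only [Pi.add_apply]
      rw [Int.fract]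
      ring
    calc u r z = u r ((fun i => Int.fract (z i)) + fun i => ((⌊z i⌋ : ℤ) : ℝ)) := by rw [← hz]
      _ = u r (fun i => Int.fract (z i)) := hper r _ _
  have hucont' : ∀ r, Continuous (u r) := fun r => hucont.comp (Continuous.prodMk_right r)
  have hrange : ∀ r, Set.range (u r) = u r '' C := by
    intro r
    apply Set.Subset.antisymm
    · rintro _ ⟨z, rfl⟩
      obtain ⟨y, hyC, hy⟩ := hredu r z
      exact ⟨y, hyC, hy.symm⟩
    · exact Set.image_subset_range _ _
  have hbdd : ∀ r, BddAbove (Set.range (u r)) := by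
    intro r
    rw [hrange r]
    exact (hC.image (hucont' r)).bddAbove
  have key : ∀ ε : ℝ, 0 < ε → u t x ≤ sSup (Set.range (u s)) + ε * (t - s) := by
    intro ε hε
    set w : ℝ × (Fin n → ℝ) → ℝ := fun p => u p.1 p.2 - ε * (p.1 - s) with hw
    have hwcont : Continuous w :=
      hucont.sub (continuous_const.mul (continuous_fst.sub continuous_const))
    set S : Set (ℝ × (Fin n → ℝ)) := Set.Icc s t ×ˢ C with hS
    have hScomp : IsCompact S := isCompact_Icc.prod hC
    have hSne : S.Nonempty := ⟨(s, 0), ⟨Set.mem_Icc.2 ⟨le_refl s, hst⟩, hC0⟩⟩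
    obtain ⟨p0, hp0S, hp0⟩ := hScomp.exists_isMaxOn hSne hwcont.continuousOn
    obtain ⟨hr0mem, hx0mem⟩ := hp0S
    -- p0.2 is a global spatial maximum of u p0.1
    have hspat : ∀ z, u p0.1 z ≤ u p0.1 p0.2 := by
      intro z
      obtain ⟨y, hyC, hy⟩ := hredu p0.1 z
      have hle : w (p0.1, y) ≤ w p0 := hp0 ⟨hr0mem, hyC⟩
      simp only [hw] at hle
      rw [hy]
      linarith
    have hr0 : p0.1 = s := by
      by_contra hne
      have hs_lt : s < p0.1 := lt_of_le_of_ne hr0mem.1 (Ne.symm hne)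
      have hmax : IsLocalMax (u p0.1) p0.2 := by
        apply IsMaxOn.isLocalMax (s := Set.univ)
        · intro z _
          exact hspat z
        · exact Filter.univ_mem
      have hdu0 : du p0.1 p0.2 = 0 := hmax.hasFDerivAt_eq_zero (hdu _ _)
      have hint : (∫ y, K p0.1 p0.2 y * (u p0.1 y - u p0.1 p0.2)) ≤ 0 := by
        apply integral_nonpos
        intro y
        exact mul_nonpos_of_nonneg_of_nonpos (hK _ _ _) (by simpa using hspat y)
      have hut0 : ut p0.1 p0.2 ≤ 0 := by
        have h := heq p0.1 p0.2
        rw [hdu0] at h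
        simp only [ContinuousLinearMap.zero_apply, add_zero] at h
        linarith
      have hg : HasDerivAt (fun r => u r p0.2 - ε * (r - s)) (ut p0.1 p0.2 - ε) p0.1 := by
        have h2 : HasDerivAt (fun r : ℝ => ε * (r - s)) ε p0.1 := by
          simpa using ((hasDerivAt_id p0.1).sub_const s).const_mul ε
        exact (hut p0.1 p0.2).sub h2
      have hmono : ∀ r ∈ Set.Icc s p0.1,
          (fun r => u r p0.2 - ε * (r - s)) r ≤ (fun r => u r p0.2 - ε * (r - s)) p0.1 := by
        intro r hr
        have hle : w (r, p0.2) ≤ w p0 := hp0 ⟨⟨hr.1, hr.2.trans hr0mem.2⟩, hx0mem⟩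
        simpa [hw] using hle
      have := left_max_deriv_nonneg' hs_lt hg hmono
      linarith
    obtain ⟨y, hyC, hy⟩ := hredu t x
    have hle : w (t, y) ≤ w p0 := hp0 ⟨⟨hst, le_refl t⟩, hyC⟩
    simp only [hw] at hle
    have hub : u s p0.2 ≤ sSup (Set.range (u s)) := le_csSup (hbdd s) (Set.mem_range_self _)
    rw [hy]
    rw [hr0] at hle
    simp only [sub_self, mul_zero, sub_zero] at hle
    linarith
  by_contra hcon
  push_neg at hcon
  set δ := u t x - sSup (Set.range (u s)) with hδ
  have hδpos : 0 < δ := by simp only [hδ]; linarith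
  have hεpos : 0 < δ / (t - s + 1) := div_pos hδpos (by linarith)
  have hk := key _ hεpos
  have h2 : δ / (t - s + 1) * (t - s) < δ := by
    rw [div_mul_eq_mul_div, div_lt_iff₀ (by linarith)]
    nlinarith
  simp only [hδ] at hk h2
  linarith

theorem stmt_10 (n : ℕ) (hn : 0 < n)
    (u ut : ℝ → (Fin n → ℝ) → ℝ)
    (du : ℝ → (Fin n → ℝ) → ((Fin n → ℝ) →L[ℝ] ℝ))
    (b : ℝ → (Fin n → ℝ) → (Fin n → ℝ))
    (K : ℝ → (Fin n → ℝ) → (Fin n → ℝ) → ℝ)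
    (hper : ∀ t x (m : Fin n → ℤ), u t (x + fun i => (m i : ℝ)) = u t x)
    (hucont : Continuous (Function.uncurry u))
    (hut : ∀ t x, HasDerivAt (fun s => u s x) (ut t x) t)
    (hdu : ∀ t x, HasFDerivAt (u t) (du t x) x)
    (hb : Continuous (Function.uncurry (fun t x => b t x)))
    (hK : ∀ t x y, 0 ≤ K t x y)
    (hKint : ∀ t x, Integrable (fun y => K t x y * (u t y - u t x)))
    (heq : ∀ t x, ut t x + du t x (b t x) = ∫ y, K t x y * (u t y - u t x)) :
    (∀ t, 0 ≤ t → ∀ x, sInf (Set.range (u 0)) ≤ u t x ∧ u t x ≤ sSup (Set.range (u 0))) ∧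
    AntitoneOn (fun t => sSup (Set.range (u t))) (Set.Ici 0) ∧
    MonotoneOn (fun t => sInf (Set.range (u t))) (Set.Ici 0) := by
  have hmain := max_principle_aux n u ut du b K hper hucont hut hdu hK heq
  -- the negated solution satisfies the same type of system
  have hmain' := max_principle_aux n (fun t x => -(u t x)) (fun t x => -(ut t x))
    (fun t x => -(du t x)) b K
    (by intro t x m; simp only [hper t x m])
    (by exact hucont.neg)
    (fun t x => (hut t x).neg)
    (fun t x => (hdu t x).neg)
    hK
    (by
      intro t x
      have h := heq t x
      have hI : (∫ y, K t x y * (-(u t y) - -(u t x))) = -∫ y, K t x y * (u t y - u t x) := by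
        rw [← integral_neg]
        congr 1
        funext y
        ring
      simp only [ContinuousLinearMap.neg_apply]
      rw [hI]
      linarith)
  have hneR : ∀ r, (Set.range (u r)).Nonempty := fun r => ⟨u r 0, Set.mem_range_self 0⟩
  have hneN : ∀ r, (Set.range (fun x => -(u r x))).Nonempty :=
    fun r => ⟨-(u r 0), Set.mem_range_self 0⟩
  have hbddN : ∀ r, BddAbove (Set.range (fun x => -(u r x))) := by
    intro r
    refine ⟨sSup (Set.range (fun x => -(u r x))), ?_⟩
    rintro _ ⟨x, rfl⟩
    exact hmain' r r le_rfl x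
  have hbddB : ∀ r, BddBelow (Set.range (u r)) := by
    intro r
    refine ⟨-sSup (Set.range (fun x => -(u r x))), ?_⟩
    rintro _ ⟨x, rfl⟩
    have h2 : -(u r x) ≤ sSup (Set.range (fun z => -(u r z))) := hmain' r r le_rfl x
    linarith
  have hnegSup : ∀ r, sSup (Set.range (fun x => -(u r x))) = -sInf (Set.range (u r)) := by
    intro r
    apply le_antisymm
    · apply csSup_le (hneN r)
      rintro _ ⟨x, rfl⟩
      show -(u r x) ≤ -sInf (Set.range (u r))
      have := csInf_le (hbddB r) (Set.mem_range_self (f := u r) x)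
      linarith
    · rw [neg_le]
      apply le_csInf (hneR r)
      rintro _ ⟨x, rfl⟩
      have h2 : -(u r x) ≤ sSup (Set.range (fun z => -(u r z))) :=
        le_csSup (hbddN r) ⟨x, rfl⟩
      linarith
  refine ⟨?_, ?_, ?_⟩
  · intro t ht x
    constructor
    · have h : -(u t x) ≤ sSup (Set.range (fun z => -(u 0 z))) := hmain' 0 t ht x
      rw [hnegSup 0] at h
      linarith
    · exact hmain 0 t ht x
  · intro s hs t ht hst
    exact csSup_le (hneR t) (by rintro _ ⟨x, rfl⟩; exact hmain s t hst x)
  · intro s hs t ht hst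
    apply le_csInf (hneR t)
    rintro _ ⟨x, rfl⟩
    have h : -(u t x) ≤ sSup (Set.range (fun z => -(u s z))) := hmain' s t hst x
    rw [hnegSup s] at h
    linarith
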